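/- For the harmonic function V₀(u,y) = lim_j (1/4π) Σ_{n=-j}^{j} (1/√((u+nε)² + |y|²) − a_{|n|}) (with a_n = 1/(nε) for n ≠ 0, a_0 = 2(−γ + log 2ε)/ε), the mean value over one period in u equals the logarithmic term: (1/ε)∫₀^ε V₀(u,y) du = −(1/4πε) log|y|² for all y ≠ 0. -/

import Mathlib

open Real Filter Topology


lemma sum_Icc_neg (j : ℕ) (h : ℤ → ℝ) :
    ∑ n ∈ Finset.Icc (-(j:ℤ)) (j:ℤ), h n
      = h 0 + ∑ i ∈ Finset.range j, (h (i+1) + h (-(i+1))) := by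
  induction j with
  | zero => simp
  | succ j ih =>
    have hset : Finset.Icc (-(j+1:ℤ)) ((j:ℤ)+1)
        = insert (-(j+1:ℤ)) (insert ((j:ℤ)+1) (Finset.Icc (-(j:ℤ)) (j:ℤ))) := by
      ext n; simp only [Finset.mem_Icc, Finset.mem_insert]; omega
    have h1 : (-(j+1:ℤ)) ∉ insert ((j:ℤ)+1) (Finset.Icc (-(j:ℤ)) (j:ℤ)) := by
      simp only [Finset.mem_insert, Finset.mem_Icc]; omega
    have h2 : ((j:ℤ)+1) ∉ Finset.Icc (-(j:ℤ)) (j:ℤ) := by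
      simp only [Finset.mem_Icc]; omega
    push_cast
    rw [hset, Finset.sum_insert h1, Finset.sum_insert h2, ih, Finset.sum_range_succ]
    push_cast
    ring

lemma integ_term (ε r c : ℝ) (hr : 0 < r) :
    ∫ u in (0:ℝ)..ε, 1 / Real.sqrt ((u + c)^2 + r^2)
      = Real.arsinh ((ε + c)/r) - Real.arsinh (c/r) := by
  have hderiv : ∀ u ∈ Set.uIcc (0:ℝ) ε,
      HasDerivAt (fun u : ℝ => Real.arsinh ((u + c)/r))
        (1 / Real.sqrt ((u + c)^2 + r^2)) u := by
    intro u _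
    have h1 : HasDerivAt (fun u : ℝ => (u + c)/r) (1/r) u := by
      simpa using ((hasDerivAt_id u).add_const c).div_const r
    have h2 := (Real.hasDerivAt_arsinh ((u + c)/r)).comp u h1
    refine h2.congr_deriv ?_
    have hA : (0:ℝ) < (u + c)^2 + r^2 := by positivity
    have : Real.sqrt (1 + ((u + c)/r)^2) = Real.sqrt ((u + c)^2 + r^2) / r := by
      rw [show (1 + ((u + c)/r)^2) = ((u + c)^2 + r^2)/r^2 by field_simp; ring,
        Real.sqrt_div hA.le, Real.sqrt_sq hr.le]
    rw [this]
    have hs : Real.sqrt ((u + c)^2 + r^2) ≠ 0 := by positivity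
    field_simp
  have hcont : Continuous fun u : ℝ => 1 / Real.sqrt ((u + c)^2 + r^2) := by
    apply continuous_const.div
    · fun_prop
    · intro u
      positivity
  rw [intervalIntegral.integral_eq_sub_of_hasDerivAt hderiv (hcont.intervalIntegrable 0 ε)]
  simp [zero_add]



lemma sq_sum_le_two (j : ℕ) :
    ∑ i ∈ Finset.range j, (1:ℝ)/((i:ℝ)+1)^2 ≤ 2 := by
  have key : ∀ j : ℕ, ∑ i ∈ Finset.range (j+1), (1:ℝ)/((i:ℝ)+1)^2 ≤ 2 - 1/((j:ℝ)+1) := by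
    intro j
    induction j with
    | zero => norm_num
    | succ j ih =>
      rw [Finset.sum_range_succ]
      have hj : (0:ℝ) < (j:ℝ)+1 := by positivity
      have h3 : (1:ℝ)/((j:ℝ)+1+1)^2 ≤ 1/((j:ℝ)+1) - 1/((j:ℝ)+1+1) := by
        rw [div_sub_div _ _ (by positivity) (by positivity),
          div_le_div_iff₀ (by positivity) (by positivity)]
        nlinarith
      push_cast
      push_cast at ih
      linarith
  match j with
  | 0 => simp
  | (k+1) =>
    have := key k
    have h0 : (0:ℝ) ≤ 1/((k:ℝ)+1) := by positivity
    linarith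

set_option maxHeartbeats 1000000 in
lemma pair_bound (ε r : ℝ) (hε : 0 < ε) (hr : 0 < r) (n u : ℝ)
    (hn : 1 ≤ n) (hu1 : 0 ≤ u) (hu2 : u ≤ ε) :
    |1/Real.sqrt ((u + n*ε)^2 + r^2) + 1/Real.sqrt ((u - n*ε)^2 + r^2) - 2/(n*ε)|
      ≤ ((ε+r)/ε^2 + r/ε^2 + (2/ε + 4/r)) / n^2 := by
  have hn0 : 0 < n := lt_of_lt_of_le one_pos hn
  have hnε : 0 < n*ε := by positivity
  set A := 1/Real.sqrt ((u + n*ε)^2 + r^2) with hA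
  set B := 1/Real.sqrt ((u - n*ε)^2 + r^2) with hB
  set s1 := Real.sqrt ((u + n*ε)^2 + r^2) with hs1
  set s2 := Real.sqrt ((u - n*ε)^2 + r^2) with hs2
  have hs1pos : 0 < s1 := by rw [hs1]; positivity
  have hs2pos : 0 < s2 := by rw [hs2]; positivity
  have hs1lo : n*ε ≤ s1 := (Real.le_sqrt' hnε).mpr (by nlinarith)
  have hs1hi : s1 ≤ (n+1)*ε + r :=
    Real.sqrt_le_iff.mpr ⟨by positivity, by nlinarith⟩
  have hs2lo : r ≤ s2 := (Real.le_sqrt' hr).mpr (by nlinarith)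
  have hs2lo' : (n-1)*ε ≤ s2 := by
    apply Real.le_sqrt_of_sq_le
    nlinarith [mul_nonneg (sub_nonneg.2 hu2) (by nlinarith : (0:ℝ) ≤ (2*n-1)*ε - u)]
  have hs2hi : s2 ≤ n*ε + r := by
    apply Real.sqrt_le_iff.mpr
    refine ⟨by positivity, ?_⟩
    nlinarith [mul_nonneg hu1 (by nlinarith : (0:ℝ) ≤ 2*(n*ε) - u)]
  -- A bounds
  have hAhi : A ≤ 1/(n*ε) := by
    rw [hA]; exact one_div_le_one_div_of_le hnε hs1lo
  have hAdiff : 1/(n*ε) - A ≤ (ε+r)/(n^2*ε^2) := by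
    have hAlo : 1/((n+1)*ε + r) ≤ A := by
      rw [hA]; exact one_div_le_one_div_of_le hs1pos hs1hi
    have e1 : 1/(n*ε) - 1/((n+1)*ε+r) = (ε+r)/((n*ε)*((n+1)*ε+r)) := by
      field_simp; ring
    have e2 : (ε+r)/((n*ε)*((n+1)*ε+r)) ≤ (ε+r)/(n^2*ε^2) := by
      apply div_le_div_of_nonneg_left (by positivity) (by positivity)
      nlinarith
    linarith
  -- B bounds
  have hBdiff_lo : 1/(n*ε) - B ≤ r/(n^2*ε^2) := by
    have hBlo : 1/(n*ε + r) ≤ B := by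
      rw [hB]; exact one_div_le_one_div_of_le hs2pos hs2hi
    have e1 : 1/(n*ε) - 1/(n*ε+r) = r/((n*ε)*(n*ε+r)) := by
      field_simp
      ring
    have e2 : r/((n*ε)*(n*ε+r)) ≤ r/(n^2*ε^2) := by
      apply div_le_div_of_nonneg_left (by positivity) (by positivity)
      nlinarith
    linarith
  have hBdiff_hi : B - 1/(n*ε) ≤ (2/ε + 4/r)/n^2 := by
    rcases le_or_gt n 2 with h2 | h2
    · have hB1 : B ≤ 1/r := by
        rw [hB]; exact one_div_le_one_div_of_le hr hs2lo
      have hsq4 : n^2 ≤ 4 := by nlinarith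
      have h14 : (1:ℝ)/r ≤ (4/r)/n^2 := by
        rw [div_div, div_le_div_iff₀ hr (by positivity)]
        nlinarith [mul_nonneg hr.le (by linarith : (0:ℝ) ≤ 4 - n^2)]
      have h4 : (0:ℝ) ≤ (2/ε)/n^2 := by positivity
      have h5 : (0:ℝ) < 1/(n*ε) := by positivity
      have e : (2/ε + 4/r)/n^2 = (2/ε)/n^2 + (4/r)/n^2 := by ring
      rw [e]
      linarith
    · have hn1 : 0 < n - 1 := by linarith
      have hBhi : B ≤ 1/((n-1)*ε) := by
        rw [hB]; exact one_div_le_one_div_of_le (by positivity) hs2lo'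
      have e1 : 1/((n-1)*ε) - 1/(n*ε) = 1/(((n-1)*n)*ε) := by
        field_simp; ring
      have e2 : 1/(((n-1)*n)*ε) ≤ (2/ε)/n^2 := by
        rw [div_div, div_le_div_iff₀ (by positivity) (by positivity)]
        nlinarith
      have h4 : (0:ℝ) ≤ (4/r)/n^2 := by positivity
      have e : (2/ε + 4/r)/n^2 = (2/ε)/n^2 + (4/r)/n^2 := by ring
      rw [e]
      linarith
  -- combine
  have habsA : |A - 1/(n*ε)| ≤ (ε+r)/(n^2*ε^2) := by
    rw [abs_le]
    have : (0:ℝ) ≤ (ε+r)/(n^2*ε^2) := by positivity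
    constructor <;> linarith
  have habsB : |B - 1/(n*ε)| ≤ r/(n^2*ε^2) + (2/ε + 4/r)/n^2 := by
    rw [abs_le]
    have h1 : (0:ℝ) ≤ r/(n^2*ε^2) := by positivity
    have h2 : (0:ℝ) ≤ (2/ε + 4/r)/n^2 := by positivity
    constructor <;> linarith
  have efin : (ε+r)/(n^2*ε^2) + (r/(n^2*ε^2) + (2/ε + 4/r)/n^2)
      = ((ε+r)/ε^2 + r/ε^2 + (2/ε + 4/r)) / n^2 := by
    field_simp
    ring
  calc |A + B - 2/(n*ε)| ≤ |A - 1/(n*ε)| + |B - 1/(n*ε)| := by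
        have h : A + B - 2/(n*ε) = (A - 1/(n*ε)) + (B - 1/(n*ε)) := by ring
        rw [h]; exact abs_add_le _ _
    _ ≤ (ε+r)/(n^2*ε^2) + (r/(n^2*ε^2) + (2/ε + 4/r)/n^2) := by linarith
    _ = ((ε+r)/ε^2 + r/ε^2 + (2/ε + 4/r)) / n^2 := efin

lemma partial_integral (ε r : ℝ) (hε : 0 < ε) (hr : 0 < r) (a : ℤ → ℝ)
    (ha : ∀ n : ℤ, n ≠ 0 → a n = 1 / ((|n| : ℝ) * ε)) (j : ℕ) :
    ∫ u in (0:ℝ)..ε, ∑ n ∈ Finset.Icc (-(j:ℤ)) (j:ℤ),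
        (1 / Real.sqrt ((u + (n : ℝ) * ε) ^ 2 + r ^ 2) - a |n|)
      = Real.arsinh (((j:ℝ)+1)*ε/r) + Real.arsinh ((j:ℝ)*ε/r)
        - ε * a 0 - 2 * ∑ i ∈ Finset.range j, 1/((i:ℝ)+1) := by
  have hcont : ∀ c : ℝ, Continuous fun u : ℝ => 1 / Real.sqrt ((u + c)^2 + r^2) := by
    intro c
    apply continuous_const.div
    · fun_prop
    · intro u; positivity
  have hint : ∀ n : ℤ, n ∈ Finset.Icc (-(j:ℤ)) (j:ℤ) →
      IntervalIntegrable (fun u : ℝ => 1 / Real.sqrt ((u + (n:ℝ)*ε)^2 + r^2) - a |n|)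
        MeasureTheory.volume 0 ε := by
    intro n _
    exact ((hcont _).sub continuous_const).intervalIntegrable 0 ε
  rw [intervalIntegral.integral_finset_sum hint]
  have hval : ∀ n : ℤ,
      (∫ u in (0:ℝ)..ε, (1 / Real.sqrt ((u + (n:ℝ)*ε)^2 + r^2) - a |n|))
        = Real.arsinh ((ε + (n:ℝ)*ε)/r) - Real.arsinh ((n:ℝ)*ε/r) - ε * a |n| := by
    intro n
    rw [intervalIntegral.integral_sub ((hcont _).intervalIntegrable 0 ε)
      (intervalIntegrable_const), integ_term ε r _ hr]
    simp
  rw [Finset.sum_congr rfl (fun n _ => hval n),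
    sum_Icc_neg j (fun n => Real.arsinh ((ε + (n:ℝ)*ε)/r) - Real.arsinh ((n:ℝ)*ε/r) - ε * a |n|)]
  set A : ℕ → ℝ := fun k => Real.arsinh ((k:ℝ)*ε/r) with hA
  push_cast
  have hpair : ∀ i : ℕ,
      Real.arsinh ((ε + ((i:ℝ) + 1) * ε) / r) - Real.arsinh (((i:ℝ) + 1) * ε / r) - ε * a |(i:ℤ) + 1|
        + (Real.arsinh ((ε + -((i:ℝ) + 1) * ε) / r) - Real.arsinh (-((i:ℝ) + 1) * ε / r) - ε * a |(-((i:ℤ) + 1))|)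
      = A (i+1+1) - A (i+1) + (A (i+1) - A i) - 2 * (1/((i:ℝ)+1)) := by
    intro i
    have hane : ((i:ℤ)+1) ≠ 0 := by positivity
    have habs1 : |(i:ℤ)+1| = (i:ℤ)+1 := abs_of_nonneg (by positivity)
    have habs2 : |(-((i:ℤ)+1))| = (i:ℤ)+1 := by rw [abs_neg]; exact habs1
    simp only [hA]
    rw [habs1, habs2, ha _ hane]
    push_cast
    rw [abs_of_nonneg (show (0:ℝ) ≤ (i:ℝ)+1 by positivity)]
    rw [show (ε + ((i:ℝ)+1)*ε)/r = ((i:ℝ)+1+1)*ε/r by ring,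
      show (ε + -((i:ℝ)+1)*ε)/r = -((i:ℝ)*ε/r) by ring,
      show -((i:ℝ)+1)*ε/r = -(((i:ℝ)+1)*ε/r) by ring,
      Real.arsinh_neg, Real.arsinh_neg]
    field_simp
    ring
  rw [Finset.sum_congr rfl (fun i _ => hpair i), Finset.sum_sub_distrib,
    Finset.sum_add_distrib, Finset.sum_range_sub (fun k => A (k+1)), Finset.sum_range_sub A,
    ← Finset.mul_sum]
  simp only [hA]
  push_cast
  simp only [zero_mul, add_zero, zero_div, Real.arsinh_zero, one_mul, mul_zero, abs_zero, sub_zero]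
  ring

lemma arsinh_sub_log_tendsto :
    Tendsto (fun x : ℝ => Real.arsinh x - Real.log x) atTop (𝓝 (Real.log 2)) := by
  have h1 : Tendsto (fun x : ℝ => x⁻¹^2) atTop (𝓝 0) := by
    have h : Tendsto (fun x : ℝ => x⁻¹) atTop (𝓝 0) := tendsto_inv_atTop_zero
    simpa using h.pow 2
  have h2 : ContinuousAt (fun t : ℝ => Real.log (1 + Real.sqrt (t+1))) 0 := by
    apply ContinuousAt.log
    · fun_prop
    · norm_num
  have h3 : Tendsto (fun x : ℝ => Real.log (1 + Real.sqrt (x⁻¹^2+1))) atTop (𝓝 (Real.log 2)) := by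
    have := h2.tendsto.comp h1
    simpa [Function.comp_def, one_add_one_eq_two] using this
  apply h3.congr'
  filter_upwards [eventually_gt_atTop (0:ℝ)] with x hx
  have hx' : x ≠ 0 := hx.ne'
  have hsq : Real.sqrt (x^2 * (x⁻¹^2+1)) = x * Real.sqrt (x⁻¹^2+1) := by
    rw [Real.sqrt_mul (sq_nonneg x), Real.sqrt_sq hx.le]
  have harg : x + Real.sqrt (1 + x^2) = x * (1 + Real.sqrt (x⁻¹^2+1)) := by
    rw [mul_add, mul_one, ← hsq]
    have : x^2 * (x⁻¹^2+1) = 1 + x^2 := by field_simp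
    rw [this]
  have hpos : (0:ℝ) < 1 + Real.sqrt (x⁻¹^2+1) := by positivity
  rw [Real.arsinh, harg, Real.log_mul hx' hpos.ne']
  ring

set_option maxHeartbeats 2000000 in
lemma partial_limit (ε r : ℝ) (hε : 0 < ε) (hr : 0 < r) (a0 : ℝ)
    (ha0 : a0 = 2 * (-Real.eulerMascheroniConstant + Real.log (2 * ε)) / ε) :
    Tendsto (fun j : ℕ => Real.arsinh (((j:ℝ)+1)*ε/r) + Real.arsinh ((j:ℝ)*ε/r)
        - ε * a0 - 2 * ∑ i ∈ Finset.range j, 1/((i:ℝ)+1)) atTop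
      (𝓝 (-Real.log (r^2))) := by
  have hc : (0:ℝ) < ε/r := by positivity
  -- the three basic limits
  have hx1 : Tendsto (fun j : ℕ => ((j:ℝ)+1)*(ε/r)) atTop atTop :=
    (tendsto_atTop_add_const_right atTop 1 tendsto_natCast_atTop_atTop).atTop_mul_const hc
  have hx2 : Tendsto (fun j : ℕ => (j:ℝ)*(ε/r)) atTop atTop :=
    tendsto_natCast_atTop_atTop.atTop_mul_const hc
  have hD1 : Tendsto (fun j : ℕ => Real.arsinh (((j:ℝ)+1)*(ε/r)) - Real.log (((j:ℝ)+1)*(ε/r)))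
      atTop (𝓝 (Real.log 2)) := arsinh_sub_log_tendsto.comp hx1
  have hD2 : Tendsto (fun j : ℕ => Real.arsinh ((j:ℝ)*(ε/r)) - Real.log ((j:ℝ)*(ε/r)))
      atTop (𝓝 (Real.log 2)) := arsinh_sub_log_tendsto.comp hx2
  have hE : Tendsto (fun j : ℕ => ((harmonic j : ℚ):ℝ) - Real.log ((j:ℝ)+1)) atTop
      (𝓝 Real.eulerMascheroniConstant) := by
    have := Real.tendsto_eulerMascheroniSeq
    unfold Real.eulerMascheroniSeq at this
    exact this
  have hF : Tendsto (fun j : ℕ => Real.log (j:ℝ) - Real.log ((j:ℝ)+1)) atTop (𝓝 0) := by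
    have h1 : Tendsto (fun j : ℕ => 1 + 1/(j:ℝ)) atTop (𝓝 1) := by
      have : Tendsto (fun j : ℕ => 1/(j:ℝ)) atTop (𝓝 0) := by
        simpa using tendsto_one_div_atTop_nhds_zero_nat (𝕜 := ℝ)
      simpa using tendsto_const_nhds.add this
    have h2 : ContinuousAt Real.log 1 := Real.continuousAt_log one_ne_zero
    have h3 : Tendsto (fun j : ℕ => Real.log (1 + 1/(j:ℝ))) atTop (𝓝 0) := by
      have := h2.tendsto.comp h1
      simpa [Function.comp_def] using this
    rw [show (0:ℝ) = -0 by norm_num]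
    apply (h3.neg.congr' _)
    · filter_upwards [eventually_ge_atTop 1] with j hj
      have hj0 : (0:ℝ) < (j:ℝ) := by exact_mod_cast hj
      rw [show (1:ℝ) + 1/(j:ℝ) = ((j:ℝ)+1)/(j:ℝ) by field_simp,
        Real.log_div (by positivity) hj0.ne']
      ring
  set γ := Real.eulerMascheroniConstant
  set R : ℝ := 2*γ - 2*Real.log (2*ε) + 2*Real.log (ε/r) with hR
  have hG : Tendsto (fun j : ℕ =>
      (Real.arsinh (((j:ℝ)+1)*(ε/r)) - Real.log (((j:ℝ)+1)*(ε/r)))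
      + (Real.arsinh ((j:ℝ)*(ε/r)) - Real.log ((j:ℝ)*(ε/r)))
      - 2*(((harmonic j : ℚ):ℝ) - Real.log ((j:ℝ)+1))
      + (Real.log (j:ℝ) - Real.log ((j:ℝ)+1)) + R) atTop
      (𝓝 (Real.log 2 + Real.log 2 - 2*γ + 0 + R)) := by
    exact ((((hD1.add hD2).sub (hE.const_mul 2)).add hF).add tendsto_const_nhds)
  have hval : Real.log 2 + Real.log 2 - 2*γ + 0 + R = -Real.log (r^2) := by
    rw [hR, Real.log_mul two_ne_zero hε.ne', Real.log_div hε.ne' hr.ne',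
      Real.log_pow]
    push_cast
    ring
  rw [hval] at hG
  apply hG.congr'
  filter_upwards [eventually_ge_atTop 1] with j hj
  have hj0 : (0:ℝ) < (j:ℝ) := by exact_mod_cast hj
  have hH : ((harmonic j : ℚ):ℝ) = ∑ i ∈ Finset.range j, 1/((i:ℝ)+1) := by
    rw [harmonic]
    push_cast
    simp [one_div]
  have hεa0 : ε * a0 = 2 * (-γ + Real.log (2*ε)) := by
    rw [ha0]; field_simp
  have hl1 : Real.log (((j:ℝ)+1)*(ε/r)) = Real.log ((j:ℝ)+1) + Real.log (ε/r) :=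
    Real.log_mul (by positivity) hc.ne'
  have hl2 : Real.log ((j:ℝ)*(ε/r)) = Real.log (j:ℝ) + Real.log (ε/r) :=
    Real.log_mul hj0.ne' hc.ne'
  rw [hl1, hl2, hH, hεa0, hR, mul_div_assoc, mul_div_assoc]
  ring

lemma partial_bound (ε r : ℝ) (hε : 0 < ε) (hr : 0 < r) (a : ℤ → ℝ)
    (ha : ∀ n : ℤ, n ≠ 0 → a n = 1 / ((|n| : ℝ) * ε)) (j : ℕ) (u : ℝ)
    (hu1 : 0 ≤ u) (hu2 : u ≤ ε) :
    abs (∑ n ∈ Finset.Icc (-(j:ℤ)) (j:ℤ),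
        (1 / Real.sqrt ((u + (n : ℝ) * ε) ^ 2 + r ^ 2) - a |n|))
      ≤ 1/r + |a 0| + 2 * ((ε+r)/ε^2 + r/ε^2 + (2/ε + 4/r)) := by
  set C : ℝ := (ε+r)/ε^2 + r/ε^2 + (2/ε + 4/r) with hC
  have hC0 : 0 ≤ C := by rw [hC]; positivity
  rw [sum_Icc_neg j (fun n => 1 / Real.sqrt ((u + (n : ℝ) * ε) ^ 2 + r ^ 2) - a |n|)]
  have h0bound : abs (1 / Real.sqrt ((u + ((0:ℤ) : ℝ) * ε) ^ 2 + r ^ 2) - a |(0:ℤ)|)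
      ≤ 1/r + |a 0| := by
    have h1 : (0:ℝ) < Real.sqrt ((u + ((0:ℤ):ℝ) * ε) ^ 2 + r ^ 2) := by positivity
    have h2 : r ≤ Real.sqrt ((u + ((0:ℤ):ℝ) * ε) ^ 2 + r ^ 2) :=
      (Real.le_sqrt' hr).mpr (by nlinarith)
    have h3 : |(1:ℝ) / Real.sqrt ((u + ((0:ℤ):ℝ) * ε) ^ 2 + r ^ 2)| ≤ 1/r := by
      rw [abs_of_nonneg (by positivity)]
      exact one_div_le_one_div_of_le hr h2
    calc abs (1 / Real.sqrt ((u + ((0:ℤ):ℝ) * ε) ^ 2 + r ^ 2) - a |(0:ℤ)|)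
        ≤ |1 / Real.sqrt ((u + ((0:ℤ):ℝ) * ε) ^ 2 + r ^ 2)| + abs (a |(0:ℤ)|) := abs_sub _ _
      _ ≤ 1/r + |a 0| := by simp only [abs_zero]; exact add_le_add h3 le_rfl
  have hstep : ∀ i : ℕ,
      abs ((1 / Real.sqrt ((u + ((i+1 : ℤ) : ℝ) * ε) ^ 2 + r ^ 2) - a |(i:ℤ)+1|)
        + (1 / Real.sqrt ((u + ((-(i+1) : ℤ) : ℝ) * ε) ^ 2 + r ^ 2) - a |(-((i:ℤ)+1))|))
      ≤ C / ((i:ℝ)+1)^2 := by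
    intro i
    have hane : ((i:ℤ)+1) ≠ 0 := by positivity
    have habs1 : |(i:ℤ)+1| = (i:ℤ)+1 := abs_of_nonneg (by positivity)
    have habs2 : |(-((i:ℤ)+1))| = (i:ℤ)+1 := by rw [abs_neg]; exact habs1
    have hpb := pair_bound ε r hε hr ((i:ℝ)+1) u (by simp) hu1 hu2
    have heq : (1 / Real.sqrt ((u + ((i+1 : ℤ) : ℝ) * ε) ^ 2 + r ^ 2) - a |(i:ℤ)+1|)
        + (1 / Real.sqrt ((u + ((-(i+1) : ℤ) : ℝ) * ε) ^ 2 + r ^ 2) - a |(-((i:ℤ)+1))|)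
        = 1/Real.sqrt ((u + ((i:ℝ)+1)*ε)^2 + r^2)
          + 1/Real.sqrt ((u - ((i:ℝ)+1)*ε)^2 + r^2) - 2/(((i:ℝ)+1)*ε) := by
      rw [habs1, habs2, ha _ hane]
      push_cast
      rw [abs_of_nonneg (show (0:ℝ) ≤ (i:ℝ)+1 by positivity)]
      rw [show (u + -((i:ℝ)+1) * ε) = (u - ((i:ℝ)+1)*ε) by ring]
      ring
    rw [heq]
    exact hpb
  calc abs ((1 / Real.sqrt ((u + ((0:ℤ) : ℝ) * ε) ^ 2 + r ^ 2) - a |(0:ℤ)|)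
        + ∑ i ∈ Finset.range j,
          ((1 / Real.sqrt ((u + ((i+1 : ℤ) : ℝ) * ε) ^ 2 + r ^ 2) - a |(i:ℤ)+1|)
            + (1 / Real.sqrt ((u + ((-(i+1) : ℤ) : ℝ) * ε) ^ 2 + r ^ 2) - a |(-((i:ℤ)+1))|)))
      ≤ abs (1 / Real.sqrt ((u + ((0:ℤ) : ℝ) * ε) ^ 2 + r ^ 2) - a |(0:ℤ)|)
        + abs (∑ i ∈ Finset.range j,
          ((1 / Real.sqrt ((u + ((i+1 : ℤ) : ℝ) * ε) ^ 2 + r ^ 2) - a |(i:ℤ)+1|)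
            + (1 / Real.sqrt ((u + ((-(i+1) : ℤ) : ℝ) * ε) ^ 2 + r ^ 2) - a |(-((i:ℤ)+1))|))) :=
        abs_add_le _ _
    _ ≤ (1/r + |a 0|) + ∑ i ∈ Finset.range j, C/((i:ℝ)+1)^2 := by
        apply add_le_add h0bound
        exact (Finset.abs_sum_le_sum_abs _ _).trans (Finset.sum_le_sum (fun i _ => hstep i))
    _ ≤ (1/r + |a 0|) + 2*C := by
        have : ∑ i ∈ Finset.range j, C/((i:ℝ)+1)^2
            = C * ∑ i ∈ Finset.range j, (1:ℝ)/((i:ℝ)+1)^2 := by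
          rw [Finset.mul_sum]
          exact Finset.sum_congr rfl (fun i _ => by ring)
        rw [this]
        have := mul_le_mul_of_nonneg_left (sq_sum_le_two j) hC0
        linarith
    _ = 1/r + |a 0| + 2*C := by ring


/-- The mean value of the Ooguri–Vafa harmonic function `V₀` over one period
in `u` is `-(1/4πε) log |y|²`, for every `y ≠ 0` in the unit disc.  `V₀ u y` is characterised
as the pointwise limit of the partial sums of the defining series. -/
theorem statement1 (ε : ℝ) (hε : 0 < ε)
    (a : ℤ → ℝ)
    (ha0 : a 0 = 2 * (-Real.eulerMascheroniConstant + Real.log (2 * ε)) / ε)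
    (ha : ∀ n : ℤ, n ≠ 0 → a n = 1 / ((|n| : ℝ) * ε))
    (V₀ : ℝ → ℂ → ℝ)
    (hV : ∀ (u : ℝ) (y : ℂ), y ≠ 0 → ‖y‖ < 1 →
      Tendsto (fun j : ℕ => (1 / (4 * π)) * ∑ n ∈ Finset.Icc (-(j : ℤ)) (j : ℤ),
          (1 / Real.sqrt ((u + (n : ℝ) * ε) ^ 2 + ‖y‖ ^ 2) - a |n|))
        atTop (nhds (V₀ u y)))
    (y : ℂ) (hy : y ≠ 0) (hy1 : ‖y‖ < 1) :
    (1 / ε) * ∫ u in (0:ℝ)..ε, V₀ u y = -(1 / (4 * π * ε)) * Real.log (‖y‖ ^ 2) := by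
  have hr : 0 < ‖y‖ := norm_pos_iff.mpr hy
  set r : ℝ := ‖y‖ with hrdef
  have hπ : (0:ℝ) < π := Real.pi_pos
  set M : ℝ := (1/(4*π)) * (1/r + |a 0| + 2 * ((ε+r)/ε^2 + r/ε^2 + (2/ε + 4/r))) with hM
  set F : ℕ → ℝ → ℝ := fun j u => (1 / (4 * π)) * ∑ n ∈ Finset.Icc (-(j : ℤ)) (j : ℤ),
      (1 / Real.sqrt ((u + (n : ℝ) * ε) ^ 2 + r ^ 2) - a |n|) with hF
  have hcontF : ∀ j : ℕ, Continuous (F j) := by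
    intro j
    apply continuous_const.mul
    apply continuous_finset_sum
    intro n _
    apply Continuous.sub _ continuous_const
    apply continuous_const.div
    · fun_prop
    · intro u; positivity
  have key : Tendsto (fun j => ∫ u in (0:ℝ)..ε, F j u) atTop
      (𝓝 (∫ u in (0:ℝ)..ε, V₀ u y)) := by
    apply intervalIntegral.tendsto_integral_filter_of_dominated_convergence
      (bound := fun _ => M)
    · exact Filter.Eventually.of_forall fun j => ((hcontF j).aestronglyMeasurable).restrict
    · apply Filter.Eventually.of_forall
      intro j
      apply MeasureTheory.ae_of_all
      intro u hu
      rw [Set.uIoc_of_le hε.le] at hu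
      rw [hF]
      simp only [Real.norm_eq_abs]
      rw [abs_mul, abs_of_pos (by positivity : (0:ℝ) < 1/(4*π)), hM]
      apply mul_le_mul_of_nonneg_left _ (by positivity)
      exact partial_bound ε r hε hr a ha j u hu.1.le hu.2
    · exact intervalIntegrable_const
    · exact MeasureTheory.ae_of_all _ fun u _ => hV u y hy hy1
  have key2 : Tendsto (fun j => ∫ u in (0:ℝ)..ε, F j u) atTop
      (𝓝 ((1/(4*π)) * (-Real.log (r^2)))) := by
    have hval : ∀ j : ℕ, ∫ u in (0:ℝ)..ε, F j u
        = (1/(4*π)) * (Real.arsinh (((j:ℝ)+1)*ε/r) + Real.arsinh ((j:ℝ)*ε/r)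
            - ε * a 0 - 2 * ∑ i ∈ Finset.range j, 1/((i:ℝ)+1)) := by
      intro j
      rw [hF]
      simp only
      rw [intervalIntegral.integral_const_mul, partial_integral ε r hε hr a ha j]
    apply Tendsto.congr (fun j => (hval j).symm)
    exact (partial_limit ε r hε hr (a 0) ha0).const_mul (1/(4*π))
  have hint : ∫ u in (0:ℝ)..ε, V₀ u y = (1/(4*π)) * (-Real.log (r^2)) :=
    tendsto_nhds_unique key key2
  rw [hint]
  field_simp
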